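/- Let $\psi : [0,\infty)\to(0,\infty)$ be bounded by $M$, Lipschitz with constant $L$, and nonincreasing, and let $f$ be a probability measure on $\mathbb{R}^d \times \mathbb{R}^d$ supported in $B^{2d}(0,R)$. Define $F[f](x,v) := \frac{\int \psi(|x-y|)(w - v)\,df(y,w)}{\int \psi(|x-y|)\,df(y,w)}$. Then there exists a constant $C$, depending only on $R$, $M$, $L$ and $\psi(2R)$, such that $|F[f](x,v)| \le C$ and $|F[f](x,v) - F[f](\tilde x, \tilde v)| \le C(|x - \tilde x| + |v - \tilde v|)$ for all $(x,v), (\tilde x, \tilde v) \in B^{2d}(0,R)$. -/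

import Mathlib

open MeasureTheory

private lemma stmt_15_aux (c M t L nx nv : ℝ) (hc : 0 < c) (hM : 0 < M) (ht : 0 < t)
    (hL : 0 ≤ L) (hnx : 0 ≤ nx) (hnv : 0 ≤ nv) :
    c⁻¹ * (L * nx * t + M * nv) + L * nx / c ^ 2 * (M * t)
      ≤ (M * t / c + (L * t / c + M / c + M * t * L / c ^ 2)) * (nx + nv) := by
  have hp : (0:ℝ) < c⁻¹ := by positivity
  have e : (M * t / c + (L * t / c + M / c + M * t * L / c ^ 2)) * (nx + nv)
      - (c⁻¹ * (L * nx * t + M * nv) + L * nx / c ^ 2 * (M * t))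
      = M * t * c⁻¹ * (nx + nv) + L * t * c⁻¹ * nv + M * c⁻¹ * nx
        + M * t * L * (c⁻¹)^2 * nv := by
    field_simp
    ring
  nlinarith [mul_nonneg (mul_nonneg (mul_nonneg hM.le ht.le) hp.le) (add_nonneg hnx hnv),
    mul_nonneg (mul_nonneg (mul_nonneg hL ht.le) hp.le) hnv,
    mul_nonneg (mul_nonneg hM.le hp.le) hnx,
    mul_nonneg (mul_nonneg (mul_nonneg (mul_nonneg hM.le ht.le) hL) (by positivity : (0:ℝ) ≤ (c⁻¹)^2)) hnv]

set_option maxHeartbeats 1000000 in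
theorem stmt_15 {d : ℕ} (ψ : ℝ → ℝ) (L : NNReal) (M R : ℝ) (hR : 0 < R)
    (hψ_pos : ∀ s, 0 ≤ s → 0 < ψ s)
    (hψ_mono : ∀ s t, 0 ≤ s → s ≤ t → ψ t ≤ ψ s)
    (hψ_lip : LipschitzOnWith L ψ (Set.Ici 0))
    (hψ_bdd : ∀ s, 0 ≤ s → ψ s ≤ M)
    (f : Measure (EuclideanSpace ℝ (Fin d) × EuclideanSpace ℝ (Fin d)))
    [IsProbabilityMeasure f]
    (hsupp : f (Metric.closedBall 0 R)ᶜ = 0)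
    (F : EuclideanSpace ℝ (Fin d) → EuclideanSpace ℝ (Fin d) → EuclideanSpace ℝ (Fin d))
    (hF : ∀ x v, F x v =
      (∫ p, ψ ‖x - p.1‖ ∂f)⁻¹ • ∫ p, ψ ‖x - p.1‖ • (p.2 - v) ∂f) :
    ∃ C : ℝ,
      (∀ x v, (x, v) ∈ Metric.closedBall
          (0 : EuclideanSpace ℝ (Fin d) × EuclideanSpace ℝ (Fin d)) R → ‖F x v‖ ≤ C) ∧
      (∀ x v x' v', (x, v) ∈ Metric.closedBall
          (0 : EuclideanSpace ℝ (Fin d) × EuclideanSpace ℝ (Fin d)) R →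
        (x', v') ∈ Metric.closedBall
          (0 : EuclideanSpace ℝ (Fin d) × EuclideanSpace ℝ (Fin d)) R →
        ‖F x v - F x' v'‖ ≤ C * (‖x - x'‖ + ‖v - v'‖)) := by
  classical
  set c := ψ (2 * R) with hc_def
  have hc : 0 < c := hψ_pos _ (by positivity)
  have hM : 0 < M := lt_of_lt_of_le (hψ_pos 0 le_rfl) (hψ_bdd 0 le_rfl)
  have hL : (0:ℝ) ≤ (L:ℝ) := L.coe_nonneg
  -- a.e. support bound
  have hae : ∀ᵐ p ∂f, ‖p‖ ≤ R := by
    rw [ae_iff]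
    convert hsupp using 2
    ext p
    simp [Metric.mem_closedBall, dist_zero_right]
  -- continuity
  have hψc : ContinuousOn ψ (Set.Ici 0) := hψ_lip.continuousOn
  have hcont : ∀ x : EuclideanSpace ℝ (Fin d),
      Continuous (fun p : EuclideanSpace ℝ (Fin d) × EuclideanSpace ℝ (Fin d) => ψ ‖x - p.1‖) := by
    intro x
    exact hψc.comp_continuous (by continuity) (fun p => norm_nonneg _)
  -- integrability of scalar integrand
  have hint1 : ∀ x, Integrable (fun p => ψ ‖x - p.1‖) f := by
    intro x
    refine (integrable_const M).mono' (hcont x).aestronglyMeasurable ?_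
    refine Filter.Eventually.of_forall fun p => ?_
    rw [Real.norm_eq_abs, abs_of_pos (hψ_pos _ (norm_nonneg _))]
    exact hψ_bdd _ (norm_nonneg _)
  -- integrability of vector integrand
  have hint2 : ∀ x v, Integrable (fun p :
      EuclideanSpace ℝ (Fin d) × EuclideanSpace ℝ (Fin d) => ψ ‖x - p.1‖ • (p.2 - v)) f := by
    intro x v
    refine (integrable_const (M * (R + ‖v‖))).mono'
      ((hcont x).smul (by fun_prop)).aestronglyMeasurable ?_
    filter_upwards [hae] with p hp
    rw [norm_smul, Real.norm_eq_abs, abs_of_pos (hψ_pos _ (norm_nonneg _))]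
    have h2 : ‖p.2 - v‖ ≤ R + ‖v‖ := by
      have := (norm_snd_le p).trans hp
      calc ‖p.2 - v‖ ≤ ‖p.2‖ + ‖v‖ := norm_sub_le _ _
        _ ≤ R + ‖v‖ := by linarith
    exact mul_le_mul (hψ_bdd _ (norm_nonneg _)) h2 (norm_nonneg _) hM.le
  -- lower bound on denominator
  have hN : ∀ x : EuclideanSpace ℝ (Fin d), ‖x‖ ≤ R → c ≤ ∫ p, ψ ‖x - p.1‖ ∂f := by
    intro x hx
    have h := integral_mono_ae (integrable_const c) (hint1 x) ?_
    · simpa using h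
    · filter_upwards [hae] with p hp
      apply hψ_mono _ _ (norm_nonneg _)
      have h1 : ‖p.1‖ ≤ R := (norm_fst_le p).trans hp
      calc ‖x - p.1‖ ≤ ‖x‖ + ‖p.1‖ := norm_sub_le _ _
        _ ≤ 2 * R := by linarith
  -- upper bound on numerator
  have hV : ∀ (x v : EuclideanSpace ℝ (Fin d)), ‖v‖ ≤ R →
      ‖∫ p, ψ ‖x - p.1‖ • (p.2 - v) ∂f‖ ≤ M * (2 * R) := by
    intro x v hv
    refine le_trans (norm_integral_le_of_norm_le
      (f := fun p : EuclideanSpace ℝ (Fin d) × EuclideanSpace ℝ (Fin d) =>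
        ψ ‖x - p.1‖ • (p.2 - v))
      (integrable_const (M * (2 * R))) ?_) (by simp)
    filter_upwards [hae] with p hp
    rw [norm_smul, Real.norm_eq_abs, abs_of_pos (hψ_pos _ (norm_nonneg _))]
    have h2 : ‖p.2 - v‖ ≤ 2 * R := by
      have := (norm_snd_le p).trans hp
      calc ‖p.2 - v‖ ≤ ‖p.2‖ + ‖v‖ := norm_sub_le _ _
        _ ≤ 2 * R := by linarith
    exact mul_le_mul (hψ_bdd _ (norm_nonneg _)) h2 (norm_nonneg _) hM.le
  -- Lipschitz of ψ
  have hψL : ∀ a b : ℝ, 0 ≤ a → 0 ≤ b → |ψ a - ψ b| ≤ (L:ℝ) * |a - b| := by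
    intro a b ha hb
    have := hψ_lip.dist_le_mul a ha b hb
    simpa [Real.dist_eq] using this
  have hψnorm : ∀ (x x' : EuclideanSpace ℝ (Fin d)) (p :
      EuclideanSpace ℝ (Fin d) × EuclideanSpace ℝ (Fin d)),
      |ψ ‖x - p.1‖ - ψ ‖x' - p.1‖| ≤ (L:ℝ) * ‖x - x'‖ := by
    intro x x' p
    calc |ψ ‖x - p.1‖ - ψ ‖x' - p.1‖| ≤ (L:ℝ) * |‖x - p.1‖ - ‖x' - p.1‖| :=
          hψL _ _ (norm_nonneg _) (norm_nonneg _)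
      _ ≤ (L:ℝ) * ‖x - x'‖ := by
          apply mul_le_mul_of_nonneg_left _ hL
          have := abs_norm_sub_norm_le (x - p.1) (x' - p.1)
          simpa [sub_sub_sub_cancel_right] using this
  -- Lipschitz of denominator
  have hNlip : ∀ x x' : EuclideanSpace ℝ (Fin d),
      |(∫ p, ψ ‖x - p.1‖ ∂f) - ∫ p, ψ ‖x' - p.1‖ ∂f| ≤ (L:ℝ) * ‖x - x'‖ := by
    intro x x'
    rw [← integral_sub (hint1 x) (hint1 x'), ← Real.norm_eq_abs]
    refine le_trans (norm_integral_le_of_norm_le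
      (f := fun p : EuclideanSpace ℝ (Fin d) × EuclideanSpace ℝ (Fin d) =>
        ψ ‖x - p.1‖ - ψ ‖x' - p.1‖)
      (integrable_const ((L:ℝ) * ‖x - x'‖))
      (Filter.Eventually.of_forall fun p => by
        rw [Real.norm_eq_abs]; exact hψnorm x x' p)) (by simp)
  -- Lipschitz of numerator
  have hVlip : ∀ (x x' v v' : EuclideanSpace ℝ (Fin d)), ‖v‖ ≤ R →
      ‖(∫ p, ψ ‖x - p.1‖ • (p.2 - v) ∂f) - ∫ p, ψ ‖x' - p.1‖ • (p.2 - v') ∂f‖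
        ≤ (L:ℝ) * ‖x - x'‖ * (2 * R) + M * ‖v - v'‖ := by
    intro x x' v v' hv
    rw [← integral_sub (hint2 x v) (hint2 x' v')]
    refine le_trans (norm_integral_le_of_norm_le
      (f := fun p : EuclideanSpace ℝ (Fin d) × EuclideanSpace ℝ (Fin d) =>
        ψ ‖x - p.1‖ • (p.2 - v) - ψ ‖x' - p.1‖ • (p.2 - v'))
      (integrable_const ((L:ℝ) * ‖x - x'‖ * (2 * R) + M * ‖v - v'‖)) ?_) (by simp)
    filter_upwards [hae] with p hp
    have h2 : ‖p.2 - v‖ ≤ 2 * R := by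
      have := (norm_snd_le p).trans hp
      calc ‖p.2 - v‖ ≤ ‖p.2‖ + ‖v‖ := norm_sub_le _ _
        _ ≤ 2 * R := by linarith
    have key : ψ ‖x - p.1‖ • (p.2 - v) - ψ ‖x' - p.1‖ • (p.2 - v')
        = (ψ ‖x - p.1‖ - ψ ‖x' - p.1‖) • (p.2 - v) + ψ ‖x' - p.1‖ • (v' - v) := by
      module
    rw [key]
    calc ‖(ψ ‖x - p.1‖ - ψ ‖x' - p.1‖) • (p.2 - v) + ψ ‖x' - p.1‖ • (v' - v)‖
        ≤ ‖(ψ ‖x - p.1‖ - ψ ‖x' - p.1‖) • (p.2 - v)‖ + ‖ψ ‖x' - p.1‖ • (v' - v)‖ :=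
          norm_add_le _ _
      _ ≤ (L:ℝ) * ‖x - x'‖ * (2 * R) + M * ‖v - v'‖ := by
          rw [norm_smul, norm_smul, Real.norm_eq_abs, Real.norm_eq_abs,
            abs_of_pos (hψ_pos _ (norm_nonneg _)), norm_sub_rev v' v]
          exact add_le_add
            (mul_le_mul (hψnorm x x' p) h2 (norm_nonneg _) (by positivity))
            (mul_le_mul_of_nonneg_right (hψ_bdd _ (norm_nonneg _)) (norm_nonneg _))
  -- the constant
  refine ⟨M * (2 * R) / c + ((L:ℝ) * (2 * R) / c + M / c + M * (2 * R) * (L:ℝ) / c ^ 2),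
    ?_, ?_⟩
  · intro x v hxv
    have hxv' : ‖((x, v) : EuclideanSpace ℝ (Fin d) × EuclideanSpace ℝ (Fin d))‖ ≤ R := by
      simpa [Metric.mem_closedBall, dist_zero_right] using hxv
    have hx : ‖x‖ ≤ R := (norm_fst_le ((x, v))).trans hxv'
    have hv : ‖v‖ ≤ R := (norm_snd_le ((x, v))).trans hxv'
    rw [hF]
    set a := ∫ p, ψ ‖x - p.1‖ ∂f with ha_def
    set u := ∫ p, ψ ‖x - p.1‖ • (p.2 - v) ∂f with hu_def
    have hNx : c ≤ a := hN x hx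
    have hNpos : (0:ℝ) < a := lt_of_lt_of_le hc hNx
    rw [norm_smul, Real.norm_eq_abs, abs_of_pos (inv_pos.mpr hNpos)]
    have hVx : ‖u‖ ≤ M * (2 * R) := hV x v hv
    have h1 : a⁻¹ ≤ c⁻¹ := inv_anti₀ hc hNx
    calc a⁻¹ * ‖u‖
        ≤ c⁻¹ * (M * (2 * R)) :=
          mul_le_mul h1 hVx (norm_nonneg _) (by positivity)
      _ ≤ M * (2 * R) / c + ((L:ℝ) * (2 * R) / c + M / c + M * (2 * R) * (L:ℝ) / c ^ 2) := by
          rw [div_eq_inv_mul]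
          have : (0:ℝ) ≤ (L:ℝ) * (2 * R) / c + M / c + M * (2 * R) * (L:ℝ) / c ^ 2 := by
            positivity
          linarith
  · intro x v x' v' hxv hxv'
    have hxv1 : ‖((x, v) : EuclideanSpace ℝ (Fin d) × EuclideanSpace ℝ (Fin d))‖ ≤ R := by
      simpa [Metric.mem_closedBall, dist_zero_right] using hxv
    have hxv2 : ‖((x', v') : EuclideanSpace ℝ (Fin d) × EuclideanSpace ℝ (Fin d))‖ ≤ R := by
      simpa [Metric.mem_closedBall, dist_zero_right] using hxv'
    have hx : ‖x‖ ≤ R := (norm_fst_le ((x, v))).trans hxv1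
    have hv : ‖v‖ ≤ R := (norm_snd_le ((x, v))).trans hxv1
    have hx' : ‖x'‖ ≤ R := (norm_fst_le ((x', v'))).trans hxv2
    have hv' : ‖v'‖ ≤ R := (norm_snd_le ((x', v'))).trans hxv2
    rw [hF, hF]
    set a := ∫ p, ψ ‖x - p.1‖ ∂f with ha_def
    set b := ∫ p, ψ ‖x' - p.1‖ ∂f with hb_def
    set u := ∫ p, ψ ‖x - p.1‖ • (p.2 - v) ∂f with hu_def
    set w := ∫ p, ψ ‖x' - p.1‖ • (p.2 - v') ∂f with hw_def
    have hac : c ≤ a := hN x hx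
    have hbc : c ≤ b := hN x' hx'
    have ha : 0 < a := lt_of_lt_of_le hc hac
    have hb : 0 < b := lt_of_lt_of_le hc hbc
    have hwb : ‖w‖ ≤ M * (2 * R) := hV x' v' hv'
    have huw : ‖u - w‖ ≤ (L:ℝ) * ‖x - x'‖ * (2 * R) + M * ‖v - v'‖ := hVlip x x' v v' hv
    have hab : |a - b| ≤ (L:ℝ) * ‖x - x'‖ := hNlip x x'
    have key : a⁻¹ • u - b⁻¹ • w = a⁻¹ • (u - w) + (a⁻¹ - b⁻¹) • w := by module
    rw [key]
    have h1 : ‖a⁻¹ • (u - w)‖ ≤ c⁻¹ * ((L:ℝ) * ‖x - x'‖ * (2 * R) + M * ‖v - v'‖) := by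
      rw [norm_smul, Real.norm_eq_abs, abs_of_pos (by positivity)]
      exact mul_le_mul (inv_anti₀ hc hac) huw (norm_nonneg _) (by positivity)
    have h2 : ‖(a⁻¹ - b⁻¹) • w‖ ≤ (L:ℝ) * ‖x - x'‖ / c ^ 2 * (M * (2 * R)) := by
      rw [norm_smul, Real.norm_eq_abs]
      have habs : |a⁻¹ - b⁻¹| ≤ (L:ℝ) * ‖x - x'‖ / c ^ 2 := by
        have heq : a⁻¹ - b⁻¹ = (b - a) / (a * b) := by
          field_simp
        rw [heq, abs_div, abs_of_pos (by positivity : (0:ℝ) < a * b)]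
        have h3 : |b - a| ≤ (L:ℝ) * ‖x - x'‖ := by rw [abs_sub_comm]; exact hab
        have h4 : c ^ 2 ≤ a * b := by nlinarith
        exact div_le_div₀ (by positivity) h3 (by positivity) h4
      exact mul_le_mul habs hwb (norm_nonneg _) (by positivity)
    calc ‖a⁻¹ • (u - w) + (a⁻¹ - b⁻¹) • w‖
        ≤ ‖a⁻¹ • (u - w)‖ + ‖(a⁻¹ - b⁻¹) • w‖ := norm_add_le _ _
      _ ≤ c⁻¹ * ((L:ℝ) * ‖x - x'‖ * (2 * R) + M * ‖v - v'‖)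
          + (L:ℝ) * ‖x - x'‖ / c ^ 2 * (M * (2 * R)) := add_le_add h1 h2
      _ ≤ (M * (2 * R) / c + ((L:ℝ) * (2 * R) / c + M / c + M * (2 * R) * (L:ℝ) / c ^ 2))
          * (‖x - x'‖ + ‖v - v'‖) :=
          stmt_15_aux c M (2 * R) (L:ℝ) ‖x - x'‖ ‖v - v'‖ hc hM (by linarith) hL
            (norm_nonneg _) (norm_nonneg _)
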